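/- Let r, d be positive integers and n ≥ (r−1)(2d+1) + 1. Any n points in ℝ^(2d) can be partitioned into r subsets whose convex hulls have a common point (a special case of Tverberg's theorem). -/

import Mathlib

open Finset Metric

variable {E : Type*} [NormedAddCommGroup E] [InnerProductSpace ℝ E]

lemma mem_convexHull_range_fin {n : ℕ} {T : Fin n → E} {x : E}
    (hx : x ∈ convexHull ℝ (Set.range T)) :
    ∃ lam : Fin n → ℝ, (∀ i, 0 ≤ lam i) ∧ ∑ i, lam i = 1 ∧ ∑ i, lam i • T i = x := by
  classical
  rw [convexHull_range_eq_exists_affineCombination] at hx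
  obtain ⟨s, w, hw0, hw1, hx⟩ := hx
  refine ⟨fun i => if i ∈ s then w i else 0, fun i => ?_, ?_, ?_⟩
  · dsimp only; split
    · exact hw0 _ ‹_›
    · exact le_refl 0
  · simp only
    rw [Finset.sum_ite_mem, Finset.univ_inter, hw1]
  · simp only [ite_smul, zero_smul]
    rw [Finset.sum_ite_mem, Finset.univ_inter, ← s.affineCombination_eq_linear_combination _ _ hw1, hx]

lemma exists_inner_nonpos {A : Set E} (y : E) (h : (0:E) ∈ convexHull ℝ A) :
    ∃ s ∈ A, inner ℝ y s ≤ (0:ℝ) := by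
  by_contra hc
  push_neg at hc
  have hcv : Convex ℝ {z : E | (0:ℝ) < inner ℝ y z} :=
    convex_halfSpace_gt ⟨fun a b => inner_add_right _ _ _, fun c a => real_inner_smul_right _ _ _⟩ 0
  have := convexHull_min (fun z hz => hc z hz) hcv h
  have h2 : (0:ℝ) < inner ℝ y (0:E) := this
  simp at h2

lemma exists_step {y z : E} (h : inner ℝ y z < (‖y‖:ℝ)^2) :
    ∃ θ : ℝ, 0 < θ ∧ θ ≤ 1 ∧ ‖(1-θ) • y + θ • z‖^2 < ‖y‖^2 := by
  set c : ℝ := ‖y‖^2 - inner ℝ y z with hc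
  have hcpos : 0 < c := by simpa [hc] using sub_pos.2 h
  set X : ℝ := ‖z - y‖^2 with hX
  have hXnn : 0 ≤ X := by positivity
  refine ⟨min 1 (c / (X + 1)), ?_, min_le_left _ _, ?_⟩
  · exact lt_min one_pos (div_pos hcpos (by linarith))
  · set θ : ℝ := min 1 (c / (X + 1)) with hθ
    have hθpos : 0 < θ := lt_min one_pos (div_pos hcpos (by linarith))
    have hθX : θ * (X + 1) ≤ c := by
      calc θ * (X + 1) ≤ (c / (X+1)) * (X + 1) := by
            apply mul_le_mul_of_nonneg_right (min_le_right _ _) (by linarith)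
        _ = c := div_mul_cancel₀ _ (by linarith)
    have key : (1-θ) • y + θ • z = y + θ • (z - y) := by module
    rw [key, norm_add_sq_real]
    have h1 : inner ℝ y (θ • (z - y)) = θ * (inner ℝ y z - ‖y‖^2) := by
      rw [real_inner_smul_right, inner_sub_right, real_inner_self_eq_norm_sq]
    have h2 : ‖θ • (z - y)‖^2 = θ^2 * X := by
      rw [norm_smul, mul_pow, hX, Real.norm_eq_abs, sq_abs]
    rw [h1, h2]
    nlinarith [sq_nonneg θ, hθpos, hcpos]

/-- Colorful Carathéodory theorem (transversal form): if `n` color classes, each of `r` points,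
all contain `0` in their convex hulls, and `n > dim`, then some transversal contains `0` in its
convex hull. -/
theorem colorful_caratheodory {n r : ℕ} [FiniteDimensional ℝ E] (hr : 0 < r)
    (hn : Module.finrank ℝ E + 1 ≤ n) (w : Fin n → Fin r → E)
    (h0 : ∀ i, (0:E) ∈ convexHull ℝ (Set.range (w i))) :
    ∃ c : Fin n → Fin r, (0:E) ∈ convexHull ℝ (Set.range fun i => w i (c i)) := by
  classical
  have hnpos : 0 < n := by omega
  have : NeZero n := ⟨by omega⟩
  have : NeZero r := ⟨by omega⟩
  set D := Module.finrank ℝ E with hD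
  let K : (Fin n → Fin r) → Set E := fun c => convexHull ℝ (Set.range fun i => w i (c i))
  have hKcpt : ∀ c, IsCompact (K c) := fun c => (Set.finite_range _).isCompact_convexHull ℝ
  have hKne : ∀ c, (K c).Nonempty := fun c =>
    ⟨_, subset_convexHull ℝ _ ⟨0, rfl⟩⟩
  obtain ⟨c₀, hc₀⟩ := Finite.exists_min (fun c => infDist 0 (K c))
  by_cases hzero : infDist 0 (K c₀) = 0
  · exact ⟨c₀, ((hKcpt c₀).isClosed.mem_iff_infDist_zero (hKne c₀)).2 hzero⟩
  exfalso
  have hpos : 0 < infDist 0 (K c₀) := lt_of_le_of_ne infDist_nonneg (Ne.symm hzero)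
  obtain ⟨y, hyK, hyd⟩ := (hKcpt c₀).exists_infDist_eq_dist (hKne c₀) 0
  have hynorm : ‖y‖ = infDist 0 (K c₀) := by rw [hyd, dist_zero_left]
  have hy0 : y ≠ 0 := by
    intro h; rw [h, norm_zero] at hynorm; exact hzero hynorm.symm
  -- the variational inequality
  have hvar : ∀ z ∈ K c₀, (‖y‖:ℝ)^2 ≤ inner ℝ y z := by
    intro z hz
    by_contra hlt
    push_neg at hlt
    obtain ⟨θ, hθ0, hθ1, hlt2⟩ := exists_step hlt
    have hmem : (1-θ) • y + θ • z ∈ K c₀ :=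
      (convex_convexHull ℝ _) hyK hz (by linarith) (le_of_lt hθ0) (by ring)
    have : infDist 0 (K c₀) ≤ ‖(1-θ) • y + θ • z‖ := by
      rw [← dist_zero_left]; exact infDist_le_dist_of_mem hmem
    nlinarith [norm_nonneg ((1-θ) • y + θ • z), norm_nonneg y]
  set T : Fin n → E := fun i => w i (c₀ i) with hT
  obtain ⟨lam, hlam0, hlam1, hlamT⟩ := mem_convexHull_range_fin hyK
  -- on the support, equality holds
  have hsupp : ∀ i, 0 < lam i → (inner ℝ y (T i) : ℝ) = ‖y‖^2 := by
    have hsum : ∑ i, lam i * ((inner ℝ y (T i) : ℝ) - ‖y‖^2) = 0 := by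
      have : ∑ i, lam i * (inner ℝ y (T i) : ℝ) = ‖y‖^2 := by
        calc ∑ i, lam i * (inner ℝ y (T i) : ℝ) = inner ℝ y (∑ i, lam i • T i) := by
              rw [inner_sum]; congr 1; funext i; rw [real_inner_smul_right]
          _ = ‖y‖^2 := by rw [hlamT, real_inner_self_eq_norm_sq]
      simp only [mul_sub]
      rw [Finset.sum_sub_distrib, this, ← Finset.sum_mul, hlam1, one_mul, sub_self]
    intro i hi
    have hterm : ∀ j ∈ Finset.univ, 0 ≤ lam j * ((inner ℝ y (T j) : ℝ) - ‖y‖^2) := by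
      intro j _
      exact mul_nonneg (hlam0 j) (sub_nonneg.2 (hvar _ (subset_convexHull ℝ _ ⟨j, rfl⟩)))
    have := (Finset.sum_eq_zero_iff_of_nonneg hterm).1 hsum i (Finset.mem_univ i)
    have h2 : (inner ℝ y (T i) : ℝ) - ‖y‖^2 = 0 := by
      rcases mul_eq_zero.1 this with h | h
      · exact absurd h (ne_of_gt hi)
      · exact h
    linarith
  -- y is in the convex hull of the support points
  set P : Set E := T '' {i | 0 < lam i} with hP
  have hyP : y ∈ convexHull ℝ P := by
    set t₁ : Finset (Fin n) := Finset.univ.filter (fun i => 0 < lam i) with ht₁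
    have hsum1 : ∑ i ∈ t₁, lam i = 1 := by
      rw [← hlam1]
      apply Finset.sum_subset (Finset.subset_univ _)
      intro i _ hi
      simp only [ht₁, Finset.mem_filter, Finset.mem_univ, true_and, not_lt] at hi
      linarith [hlam0 i]
    have hsumT : ∑ i ∈ t₁, lam i • T i = y := by
      rw [← hlamT]
      apply Finset.sum_subset (Finset.subset_univ _)
      intro i _ hi
      simp only [ht₁, Finset.mem_filter, Finset.mem_univ, true_and, not_lt] at hi
      have : lam i = 0 := le_antisymm hi (hlam0 i)
      rw [this, zero_smul]
    rw [← hsumT, ← Finset.centerMass_eq_of_sum_1 _ _ hsum1]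
    apply Finset.centerMass_mem_convexHull _ (fun i _ => hlam0 i) (by rw [hsum1]; norm_num)
    intro i hi
    simp only [ht₁, Finset.mem_filter, Finset.mem_univ, true_and] at hi
    exact ⟨i, hi, rfl⟩
  -- Caratheodory: affinely independent subset
  set t : Finset E := Caratheodory.minCardFinsetOfMemConvexHull hyP with htdef
  have htsub : ↑t ⊆ P := Caratheodory.minCardFinsetOfMemConvexHull_subseteq hyP
  have hyt : y ∈ convexHull ℝ (t : Set E) := Caratheodory.mem_minCardFinsetOfMemConvexHull hyP
  have htaff : AffineIndependent ℝ ((↑) : t → E) :=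
    Caratheodory.affineIndependent_minCardFinsetOfMemConvexHull hyP
  -- all points of t lie on the hyperplane ⟪y,z⟫ = ‖y‖²
  have htplane : ∀ z ∈ t, (inner ℝ y z : ℝ) = ‖y‖^2 := by
    intro z hz
    obtain ⟨i, hi, rfl⟩ := htsub hz
    exact hsupp i hi
  -- hence t is linearly independent
  have htlin : LinearIndependent ℝ ((↑) : t → E) := by
    rw [Fintype.linearIndependent_iff]
    intro g hg
    have hgsum : ∑ i : t, g i = 0 := by
      have h1 : (inner ℝ y (∑ i : t, g i • (i:E)) : ℝ) = 0 := by rw [hg, inner_zero_right]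
      rw [inner_sum] at h1
      simp_rw [real_inner_smul_right] at h1
      have h2 : ∑ i : t, g i * (inner ℝ y (i:E) : ℝ) = ∑ i : t, g i * ‖y‖^2 := by
        apply Finset.sum_congr rfl
        intro i _
        rw [htplane i i.2]
      rw [h2, ← Finset.sum_mul] at h1
      have hy2 : (‖y‖:ℝ)^2 ≠ 0 := pow_ne_zero 2 (norm_ne_zero_iff.2 hy0)
      exact (mul_eq_zero.1 h1).resolve_right hy2
    intro i
    exact htaff.eq_zero_of_sum_eq_zero (s := Finset.univ) (w := g) hgsum hg i (Finset.mem_univ i)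
  have htcard : t.card ≤ D := by
    have := htlin.fintype_card_le_finrank
    simpa using this
  -- pick representative indices
  have hrep : ∀ z ∈ t, ∃ i : Fin n, 0 < lam i ∧ T i = z := by
    intro z hz
    obtain ⟨i, hi, hTi⟩ := htsub hz
    exact ⟨i, hi, hTi⟩
  set rep : (z : E) → z ∈ t → Fin n := fun z hz => (hrep z hz).choose with hrepdef
  set B : Finset (Fin n) := t.attach.image (fun z => rep z.1 z.2) with hB
  have hBcard : B.card ≤ D := le_trans (Finset.card_image_le.trans (by simp)) htcard
  have hex : ∃ i₀ : Fin n, i₀ ∉ B := by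
    by_contra hc
    push_neg at hc
    have : (Finset.univ : Finset (Fin n)) ⊆ B := fun i _ => hc i
    have := Finset.card_le_card this
    simp only [Finset.card_univ, Fintype.card_fin] at this
    omega
  obtain ⟨i₀, hi₀⟩ := hex
  -- pick a point in color class i₀ with nonpositive inner product
  obtain ⟨s₀, hs₀mem, hs₀⟩ := exists_inner_nonpos y (h0 i₀)
  obtain ⟨j₀, rfl⟩ := hs₀mem
  -- new transversal
  set c₁ : Fin n → Fin r := Function.update c₀ i₀ j₀ with hc₁
  have htsub1 : (t : Set E) ⊆ Set.range fun i => w i (c₁ i) := by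
    intro z hz
    have hz' : z ∈ t := hz
    refine ⟨rep z hz', ?_⟩
    have hne : rep z hz' ≠ i₀ := by
      intro h
      apply hi₀
      rw [← h]
      exact Finset.mem_image.2 ⟨⟨z, hz'⟩, Finset.mem_attach _ _, rfl⟩
    show w (rep z hz') (c₁ (rep z hz')) = z
    have : c₁ (rep z hz') = c₀ (rep z hz') := Function.update_of_ne hne _ _
    rw [this]
    exact (hrep z hz').choose_spec.2
  have hs₀mem1 : w i₀ j₀ ∈ Set.range fun i => w i (c₁ i) := by
    refine ⟨i₀, ?_⟩
    simp [hc₁]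
  -- strict improvement
  have hstep : (inner ℝ y (w i₀ j₀) : ℝ) < ‖y‖^2 := lt_of_le_of_lt hs₀ (pow_pos (norm_pos_iff.2 hy0) 2)
  obtain ⟨θ, hθ0, hθ1, hlt⟩ := exists_step hstep
  have hymem : y ∈ K c₁ := convexHull_mono htsub1 hyt
  have hpmem : (1-θ) • y + θ • w i₀ j₀ ∈ K c₁ :=
    (convex_convexHull ℝ _) hymem (subset_convexHull ℝ _ hs₀mem1) (by linarith) (le_of_lt hθ0) (by ring)
  have h1 : infDist 0 (K c₁) ≤ ‖(1-θ) • y + θ • w i₀ j₀‖ := by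
    rw [← dist_zero_left]; exact infDist_le_dist_of_mem hpmem
  have h2 : infDist 0 (K c₀) ≤ infDist 0 (K c₁) := hc₀ c₁
  have h3 : ‖(1-θ) • y + θ • w i₀ j₀‖ < ‖y‖ := by
    nlinarith [norm_nonneg ((1-θ) • y + θ • w i₀ j₀), norm_nonneg y]
  rw [hynorm] at h3
  linarith

/-- Tverberg's theorem in `ℝ^(2d)`: any `n ≥ (r−1)(2d+1) + 1` points can be
partitioned into `r` subsets whose convex hulls have a common point. -/
theorem tverberg_R2d
    {r d n : ℕ} (hr : 0 < r) (hd : 0 < d)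
    (hn : (r - 1) * (2 * d + 1) + 1 ≤ n)
    (p : Fin n → EuclideanSpace ℝ (Fin (2 * d))) :
    ∃ P : Fin n → Fin r, ∃ x : EuclideanSpace ℝ (Fin (2 * d)),
      ∀ j : Fin r, x ∈ convexHull ℝ (p '' {i | P i = j}) := by
  classical
  -- lifted points
  set q : Fin n → Fin (2*d+1) → ℝ := fun i b => if h : (b:ℕ) < 2*d then p i ⟨b, h⟩ else 1 with hq
  set v : Fin r → Fin (r-1) → ℝ :=
    fun j a => (if (j:ℕ) = (a:ℕ) then 1 else 0) - (if (j:ℕ) = r-1 then 1 else 0) with hv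
  set w : Fin n → Fin r → EuclideanSpace ℝ (Fin (r-1) × Fin (2*d+1)) := fun i j => WithLp.toLp 2 (fun ab : Fin (r-1) × Fin (2*d+1) => v j ab.1 * q i ab.2) with hw
  -- sum-of-ite helpers
  have hsum_ite : ∀ (m:ℕ) (hm : m < r) (f : Fin r → ℝ),
      ∑ j : Fin r, (if (j:ℕ) = m then (1:ℝ) else 0) * f j = f ⟨m,hm⟩ := by
    intro m hm f
    have hcond : ∀ j : Fin r, ((j:ℕ) = m) ↔ (j = ⟨m,hm⟩) := fun j => by
      constructor
      · intro h; exact Fin.ext h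
      · intro h; rw [h]
    simp_rw [hcond, ite_mul, one_mul, zero_mul]
    simp
  have hrsub : r - 1 < r := by omega
  have hvsum : ∀ a : Fin (r-1), ∑ j : Fin r, v j a = 0 := by
    intro a
    have ha : (a:ℕ) < r := by omega
    simp only [hv, Finset.sum_sub_distrib]
    have h1 := hsum_ite (a:ℕ) ha (fun _ => 1)
    have h2 := hsum_ite (r-1) hrsub (fun _ => 1)
    simp only [mul_one] at h1 h2
    rw [h1, h2, sub_self]
  -- each color class contains 0 in its convex hull
  have h0 : ∀ i, (0 : EuclideanSpace ℝ (Fin (r-1) × Fin (2*d+1))) ∈ convexHull ℝ (Set.range (w i)) := by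
    intro i
    apply mem_convexHull_of_exists_fintype (fun _ : Fin r => (r:ℝ)⁻¹) (w i)
    · intro j; positivity
    · rw [Finset.sum_const, Finset.card_univ, Fintype.card_fin, nsmul_eq_mul,
        mul_inv_cancel₀ (by exact_mod_cast hr.ne')]
    · exact fun j => ⟨j, rfl⟩
    · rw [← Finset.smul_sum]
      have : ∑ j, w i j = (0 : EuclideanSpace ℝ (Fin (r-1) × Fin (2*d+1))) := by
        rw [WithLp.ext_iff, WithLp.ofLp_sum]
        funext ab
        rw [Finset.sum_apply]
        show ∑ j, v j ab.1 * q i ab.2 = 0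
        rw [← Finset.sum_mul, hvsum ab.1, zero_mul]
      rw [this, smul_zero]
  -- apply colorful Caratheodory
  have hn' : Module.finrank ℝ (EuclideanSpace ℝ (Fin (r-1) × Fin (2*d+1))) + 1 ≤ n := by
    rw [finrank_euclideanSpace]
    simpa using hn
  obtain ⟨c, hc⟩ := colorful_caratheodory hr hn' w h0
  -- extract weights
  have hwex : ∃ lam : Fin n → ℝ, (∀ i, 0 ≤ lam i) ∧ ∑ i, lam i = 1 ∧
      ∑ i, lam i • w i (c i) = 0 := by
    exact mem_convexHull_range_fin hc
  obtain ⟨lam, hlam0, hlam1, hlamT⟩ := hwex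
  -- fibers and partial sums
  set F : Fin r → Finset (Fin n) := fun j => Finset.univ.filter (fun i => c i = j) with hF
  set u : Fin r → Fin (2*d+1) → ℝ := fun j b => ∑ i ∈ F j, lam i * q i b with hu
  -- coordinate equations
  have hcoord : ∀ (a : Fin (r-1)) (b : Fin (2*d+1)),
      ∑ i, lam i * (v (c i) a * q i b) = 0 := by
    intro a b
    have h := congrFun (congrArg WithLp.ofLp hlamT) (a,b)
    rw [WithLp.ofLp_sum, Finset.sum_apply] at h
    exact h
  have hgroup : ∀ (a : Fin (r-1)) (b : Fin (2*d+1)), ∑ j, v j a * u j b = 0 := by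
    intro a b
    rw [← hcoord a b, ← Finset.sum_fiberwise Finset.univ c (fun i => lam i * (v (c i) a * q i b))]
    apply Finset.sum_congr rfl
    intro j _
    rw [hu]
    dsimp only
    rw [Finset.mul_sum]
    apply Finset.sum_congr rfl
    intro i hi
    have : c i = j := (Finset.mem_filter.1 hi).2
    rw [this]; ring
  set l' : Fin r := ⟨r-1, hrsub⟩ with hl'
  have hueq : ∀ (j : Fin r) (b : Fin (2*d+1)), u j b = u l' b := by
    intro j b
    by_cases hj : (j:ℕ) < r - 1
    · have hjr : (j:ℕ) < r := j.isLt
      have h := hgroup ⟨(j:ℕ), hj⟩ b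
      simp only [hv, sub_mul, Finset.sum_sub_distrib] at h
      rw [hsum_ite (j:ℕ) hjr (fun jj => u jj b), hsum_ite (r-1) hrsub (fun jj => u jj b)] at h
      have : (⟨(j:ℕ), hjr⟩ : Fin r) = j := by simp [Fin.ext_iff]
      rw [this] at h
      have : u j b - u l' b = 0 := h
      linarith
    · have : j = l' := by
        apply Fin.ext
        simp only [hl']
        omega
      rw [this]
  -- the "last coordinate" gives equal total weights on fibers
  set bl : Fin (2*d+1) := ⟨2*d, by omega⟩ with hbl
  have hqbl : ∀ i, q i bl = 1 := by
    intro i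
    rw [hq]
    exact dif_neg (lt_irrefl _)
  have hσ : ∀ j, u j bl = ∑ i ∈ F j, lam i := by
    intro j
    rw [hu]
    dsimp only
    apply Finset.sum_congr rfl
    intro i _
    rw [hqbl i, mul_one]
  have htot : ∑ j, u j bl = 1 := by
    rw [← hlam1]
    simp_rw [hσ]
    exact Finset.sum_fiberwise Finset.univ c lam
  have hrul : (r:ℝ) * u l' bl = 1 := by
    rw [← htot, Finset.sum_congr rfl (fun j _ => hueq j bl), Finset.sum_const,
      Finset.card_univ, Fintype.card_fin, nsmul_eq_mul]
  -- the common point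
  set x : EuclideanSpace ℝ (Fin (2*d)) :=
    WithLp.toLp 2 (fun b' => (r:ℝ) * u l' (Fin.castSucc b') : Fin (2*d) → ℝ) with hx
  refine ⟨c, x, ?_⟩
  intro j
  have hsums : ∑ i ∈ F j, (r:ℝ) * lam i = 1 := by
    rw [← Finset.mul_sum, ← hσ j, hueq j bl]
    exact hrul
  have hcm : (F j).centerMass (fun i => (r:ℝ) * lam i) p ∈ convexHull ℝ (p '' {i | c i = j}) := by
    apply Finset.centerMass_mem_convexHull
    · intro i _
      have := hlam0 i
      positivity
    · rw [hsums]; norm_num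
    · intro i hi
      exact ⟨i, (Finset.mem_filter.1 hi).2, rfl⟩
  have hcmx : (F j).centerMass (fun i => (r:ℝ) * lam i) p = x := by
    rw [Finset.centerMass_eq_of_sum_1 _ _ hsums]
    rw [WithLp.ext_iff, WithLp.ofLp_sum]
    funext b'
    rw [Finset.sum_apply]
    show ∑ i ∈ F j, ((r:ℝ) * lam i) * p i b' = (r:ℝ) * u l' (Fin.castSucc b')
    rw [← hueq j (Fin.castSucc b'), hu]
    dsimp only
    rw [Finset.mul_sum]
    apply Finset.sum_congr rfl
    intro i _
    have hqb : q i (Fin.castSucc b') = p i b' := by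
      rw [hq]
      dsimp only
      rw [dif_pos (by simpa using b'.isLt)]
      rfl
    rw [hqb]; ring
  rw [← hcmx]
  exact hcm
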